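/- arXiv:1205.4260 — 5 statements merged into one kernel-verified Lean document; each statement's English description precedes it below -/
import Mathlib

section
/- Suppose f satisfies a global Łojasiewicz inequality and is bounded below. Then f is flow-closed: for every differentiable curve x : [0,∞) → E satisfying x′(t) = −∇f(x(t)) for all t ≥ 0, the limit lim_{t→∞} x(t) exists; in particular, every positive-time trajectory of −∇f is contained in a compact subset of E. -/
noncomputable section

open Set Filter

/-- A function satisfying a global Łojasiewicz inequality and bounded
below is flow-closed: every positive-time trajectory of `-∇f` converges, and in
particular is contained in a compact set. -/
theorem stmt3 {E : Type*} [NormedAddCommGroup E] [InnerProductSpace ℝ E]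
    [FiniteDimensional ℝ E]
    (f : E → ℝ) (hf : ContDiff ℝ 1 f)
    (hloj : ∀ fc ∈ closure (Set.range f), ∃ ε > (0:ℝ), ∃ k > (0:ℝ), ∃ a : ℝ,
      0 < a ∧ a < 1 ∧ ∀ x : E, |f x - fc| < ε → ‖gradient f x‖ ≥ k * |f x - fc| ^ a)
    (hbdd : BddBelow (Set.range f))
    (γ : ℝ → E)
    (hγ : ∀ t : ℝ, 0 ≤ t → HasDerivWithinAt γ (-(gradient f (γ t))) (Set.Ici 0) t) :
    (∃ L : E, Filter.Tendsto γ Filter.atTop (nhds L)) ∧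
      ∃ C : Set E, IsCompact C ∧ ∀ t : ℝ, 0 ≤ t → γ t ∈ C := by
  have hfd : Differentiable ℝ f := hf.differentiable one_ne_zero
  set g : ℝ → ℝ := fun t => f (γ t) with hg_def
  -- derivative of g along the flow
  have hgderiv : ∀ t : ℝ, 0 ≤ t →
      HasDerivWithinAt g (-‖gradient f (γ t)‖ ^ 2) (Set.Ici 0) t := by
    intro t ht
    have h1 : HasGradientAt f (gradient f (γ t)) (γ t) := (hfd (γ t)).hasGradientAt
    have h2 := h1.hasFDerivAt.comp_hasDerivWithinAt t (hγ t ht)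
    refine h2.congr_deriv ?_
    simp [InnerProductSpace.toDual_apply_apply, inner_neg_right, real_inner_self_eq_norm_sq]
    rw [h1.hasFDerivAt.fderiv, InnerProductSpace.toDual_apply_apply, real_inner_self_eq_norm_sq]
  have hγc : ContinuousOn γ (Set.Ici 0) := fun t ht => (hγ t ht).continuousWithinAt
  have hgc : ContinuousOn g (Set.Ici 0) := fun t ht => (hgderiv t ht).continuousWithinAt
  -- g is antitone on [0,∞)
  have hganti : AntitoneOn g (Set.Ici 0) := by
    apply antitoneOn_of_hasDerivWithinAt_nonpos (f' := fun t => -‖gradient f (γ t)‖ ^ 2)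
      (convex_Ici 0) hgc
    · intro x hx
      rw [interior_Ici] at hx
      exact ((hgderiv x (le_of_lt hx)).mono interior_subset)
    · intro x _
      exact neg_nonpos.2 (by positivity)
  -- the limit value fc of g
  set g' : ℝ → ℝ := fun t => g (max t 0) with hg'_def
  have hganti' : Antitone g' := fun s t hst =>
    hganti (le_max_right s 0) (le_max_right t 0) (max_le_max hst le_rfl)
  obtain ⟨m, hm⟩ := hbdd
  have hbdd' : BddBelow (Set.range g') := by
    refine ⟨m, ?_⟩
    rintro y ⟨t, rfl⟩
    exact hm ⟨γ (max t 0), rfl⟩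
  set fc : ℝ := ⨅ t, g' t with hfc_def
  have htend' : Tendsto g' atTop (nhds fc) := tendsto_atTop_ciInf hganti' hbdd'
  have hgg' : ∀ᶠ t in atTop, g' t = g t := by
    filter_upwards [eventually_ge_atTop (0:ℝ)] with t ht
    simp [hg'_def, max_eq_left ht]
  have htend : Tendsto g atTop (nhds fc) := htend'.congr' hgg'
  have hfc_mem : fc ∈ closure (Set.range f) :=
    mem_closure_of_tendsto htend (Eventually.of_forall fun t => ⟨γ t, rfl⟩)
  have hfc_le : ∀ t : ℝ, 0 ≤ t → fc ≤ g t := by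
    intro t ht
    have h1 : g' t = g t := by simp [hg'_def, max_eq_left ht]
    exact h1 ▸ ciInf_le hbdd' t
  obtain ⟨ε, hε, k, hk, a, ha0, ha1, hLoj⟩ := hloj fc hfc_mem
  -- a time after which g is ε-close to fc
  have hev : ∀ᶠ t in atTop, g t < fc + ε ∧ 0 ≤ t :=
    (htend.eventually_lt_const (lt_add_of_pos_right fc hε)).and (eventually_ge_atTop 0)
  obtain ⟨T1, hT1⟩ := eventually_atTop.mp hev
  set T0 : ℝ := max T1 0 with hT0_def
  have hT0nonneg : 0 ≤ T0 := le_max_right T1 0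
  have hT0 : ∀ t : ℝ, T0 ≤ t → g t < fc + ε ∧ 0 ≤ t := fun t ht =>
    hT1 t ((le_max_left T1 0).trans ht)
  -- main step: convergence
  have hconv : ∃ L : E, Filter.Tendsto γ Filter.atTop (nhds L) := by
    by_cases hstay : ∃ t0, T0 ≤ t0 ∧ g t0 ≤ fc
    · -- the flow reaches the critical value and stops
      obtain ⟨t0, ht0T, ht0⟩ := hstay
      have ht00 : (0:ℝ) ≤ t0 := hT0nonneg.trans ht0T
      have hconst : ∀ t, t ∈ Set.Ici t0 → g t = fc := by
        intro t ht
        have h1 : g t ≤ g t0 := hganti (mem_Ici.2 ht00) (ht00.trans ht) ht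
        exact le_antisymm (h1.trans ht0) (hfc_le t (ht00.trans ht))
      have hgrad0 : ∀ t, t ∈ Set.Ici t0 → gradient f (γ t) = 0 := by
        intro t ht
        have hsub : Set.Ici t ⊆ Set.Ici (0:ℝ) := Ici_subset_Ici.2 (ht00.trans ht)
        have hd1 : HasDerivWithinAt g (-‖gradient f (γ t)‖ ^ 2) (Set.Ici t0) t :=
          (hgderiv t (ht00.trans ht)).mono (Ici_subset_Ici.2 ht00)
        have hd2 : HasDerivWithinAt g 0 (Set.Ici t0) t :=
          (hasDerivWithinAt_const t (Set.Ici t0) fc).congr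
            (fun u hu => hconst u hu) (hconst t ht)
        have huniq : UniqueDiffWithinAt ℝ (Set.Ici t0) t := uniqueDiffOn_Ici t0 t ht
        have := huniq.eq_deriv _ hd1 hd2
        have hn : ‖gradient f (γ t)‖ = 0 := by nlinarith [norm_nonneg (gradient f (γ t))]
        exact norm_eq_zero.mp hn
      have hγconst : ∀ t, t ∈ Set.Ici t0 → γ t = γ t0 := by
        intro t ht
        have := (convex_Ici t0).norm_image_sub_le_of_norm_hasDerivWithin_le
          (f := γ) (f' := fun u => -(gradient f (γ u))) (C := 0)
          (fun u hu => (hγ u (ht00.trans hu)).mono (Ici_subset_Ici.2 ht00))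
          (fun u hu => by simp [hgrad0 u hu]) (self_mem_Ici) ht
        have h0 : ‖γ t - γ t0‖ ≤ 0 := by simpa using this
        have := le_antisymm h0 (norm_nonneg _)
        rwa [norm_sub_eq_zero_iff] at this
      refine ⟨γ t0, ?_⟩
      refine Tendsto.congr' ?_ tendsto_const_nhds
      filter_upwards [eventually_ge_atTop t0] with t ht
      exact (hγconst t ht).symm
    · -- g stays strictly above fc : Łojasiewicz estimate
      push_neg at hstay
      have hpos : ∀ t, T0 ≤ t → 0 < g t - fc := fun t ht => sub_pos.2 (hstay t ht)
      set C0 : ℝ := 1 / (k * (1 - a)) with hC0_def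
      have h1a : 0 < 1 - a := sub_pos.2 ha1
      have hC0pos : 0 < C0 := by positivity
      set h : ℝ → ℝ := fun t => (g t - fc) ^ (1 - a) with hh_def
      -- derivative of h
      have hhderiv : ∀ x, T0 ≤ x → HasDerivWithinAt h
          (-‖gradient f (γ x)‖ ^ 2 * (1 - a) * (g x - fc) ^ (1 - a - 1))
          (Set.Ici 0) x := by
        intro x hx
        have hx0 : (0:ℝ) ≤ x := hT0nonneg.trans hx
        exact ((hgderiv x hx0).sub_const fc).rpow_const (Or.inl (ne_of_gt (hpos x hx)))
      -- key pointwise bound : ‖γ'‖ ≤ C0 * (-h')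
      have hbound : ∀ x, T0 ≤ x → ‖gradient f (γ x)‖ ≤
          C0 * (‖gradient f (γ x)‖ ^ 2 * (1 - a) * (g x - fc) ^ (1 - a - 1)) := by
        intro x hx
        set v : E := gradient f (γ x)
        set d : ℝ := g x - fc with hd_def
        have hd : 0 < d := hpos x hx
        have hdε : |d| < ε := by
          rw [abs_of_pos hd]
          have := (hT0 x hx).1
          simp only [hd_def]
          linarith
        have hL' : k * d ^ a ≤ ‖v‖ := by
          have := hLoj (γ x) (by simpa [hd_def] using hdε)
          rwa [show f (γ x) - fc = d from rfl, abs_of_pos hd] at this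
        have hcancel : d ^ a * d ^ (-a) = 1 := by
          rw [← Real.rpow_add hd]; simp
        have h1 : k * ‖v‖ ≤ ‖v‖ ^ 2 * d ^ (-a) := by
          have h2 : (k * d ^ a) * ‖v‖ ≤ ‖v‖ * ‖v‖ :=
            mul_le_mul hL' le_rfl (norm_nonneg v) (norm_nonneg v)
          have h3 : (k * d ^ a) * ‖v‖ * d ^ (-a) ≤ ‖v‖ * ‖v‖ * d ^ (-a) :=
            mul_le_mul_of_nonneg_right h2 (Real.rpow_nonneg hd.le _)
          calc k * ‖v‖ = (k * d ^ a) * ‖v‖ * d ^ (-a) := by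
                rw [show (k * d ^ a) * ‖v‖ * d ^ (-a) = k * ‖v‖ * (d ^ a * d ^ (-a)) by ring,
                  hcancel, mul_one]
            _ ≤ ‖v‖ * ‖v‖ * d ^ (-a) := h3
            _ = ‖v‖ ^ 2 * d ^ (-a) := by ring
        have hexp : (1 : ℝ) - a - 1 = -a := by ring
        rw [hexp]
        have h4 : C0 * (1 - a) * (k * ‖v‖) ≤ C0 * (1 - a) * (‖v‖ ^ 2 * d ^ (-a)) :=
          mul_le_mul_of_nonneg_left h1 (by positivity)
        have h5 : C0 * (1 - a) * k = 1 := by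
          rw [hC0_def]; field_simp
        calc ‖v‖ = C0 * (1 - a) * k * ‖v‖ := by rw [h5, one_mul]
          _ = C0 * (1 - a) * (k * ‖v‖) := by ring
          _ ≤ C0 * (1 - a) * (‖v‖ ^ 2 * d ^ (-a)) := h4
          _ = C0 * (‖v‖ ^ 2 * (1 - a) * d ^ (-a)) := by ring
      -- continuity of h on [T0, ∞)
      have hhc : ContinuousOn h (Set.Ici T0) := by
        intro x hx
        exact ((hhderiv x hx).mono (Ici_subset_Ici.2 hT0nonneg)).continuousWithinAt
      -- main length estimate
      have hmain : ∀ s t : ℝ, T0 ≤ s → s ≤ t → ‖γ t - γ s‖ ≤ C0 * (h s - h t) := by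
        intro s t hs hst
        have hIcc : Set.Icc s t ⊆ Set.Ici T0 := fun u hu => hs.trans hu.1
        have hIcc0 : Set.Icc s t ⊆ Set.Ici (0:ℝ) := fun u hu =>
          (hT0nonneg.trans (hs.trans hu.1))
        have key := image_norm_le_of_norm_deriv_right_le_deriv_boundary'
          (f := fun u => γ u - γ s) (f' := fun u => -(gradient f (γ u)))
          (a := s) (b := t)
          (B := fun u => C0 * (h s - h u))
          (B' := fun u => C0 * (‖gradient f (γ u)‖ ^ 2 * (1 - a) * (g u - fc) ^ (1 - a - 1)))
          ((hγc.mono hIcc0).sub continuousOn_const)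
          (fun x hx => ((hγ x (hIcc0 ⟨hx.1, hx.2.le⟩)).mono
            (Ici_subset_Ici.2 (hT0nonneg.trans (hs.trans hx.1)))).sub_const _)
          (by simp)
          (continuousOn_const.mul (continuousOn_const.sub (hhc.mono hIcc)))
          (fun x hx => by
            have hx' : T0 ≤ x := hs.trans hx.1
            have hx0 : (0:ℝ) ≤ x := hT0nonneg.trans hx'
            have hd := (hhderiv x hx').mono (Ici_subset_Ici.2 hx0)
            have := ((hasDerivWithinAt_const x (Set.Ici x) (h s)).sub hd).const_mul C0
            refine this.congr_deriv ?_
            ring)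
          (fun x hx => by
            have hx' : T0 ≤ x := hs.trans hx.1
            simpa using hbound x hx')
        have := key (right_mem_Icc.2 hst)
        simpa using this
      -- h is nonnegative and tends to 0
      have hhnonneg : ∀ t, T0 ≤ t → 0 ≤ h t := fun t ht =>
        Real.rpow_nonneg (hpos t ht).le _
      have htendh : Tendsto h atTop (nhds 0) := by
        have h1 : Tendsto (fun t => g t - fc) atTop (nhds 0) := by
          simpa using htend.sub_const fc
        have h2 := h1.rpow_const (p := 1 - a) (Or.inr h1a.le)
        rwa [Real.zero_rpow (ne_of_gt h1a)] at h2
      -- γ is a Cauchy "sequence" indexed by ℝ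
      have hcauchy : CauchySeq γ := by
        rw [Metric.cauchySeq_iff']
        intro ε' hε'
        have h3 : Tendsto (fun t => C0 * h t) atTop (nhds 0) := by
          simpa using htendh.const_mul C0
        have h4 : ∀ᶠ t in atTop, C0 * h t < ε' ∧ T0 ≤ t :=
          (h3.eventually_lt_const hε').and (eventually_ge_atTop T0)
        obtain ⟨N, hN⟩ := h4.exists
        refine ⟨N, fun n hn => ?_⟩
        have hb := hmain N n hN.2 hn
        rw [dist_eq_norm]
        calc ‖γ n - γ N‖ ≤ C0 * (h N - h n) := hb
          _ ≤ C0 * h N := by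
              have := hhnonneg n (hN.2.trans hn)
              nlinarith
          _ < ε' := hN.1
      exact cauchySeq_tendsto_of_complete hcauchy
  -- compactness part
  refine ⟨hconv, ?_⟩
  obtain ⟨L, hL⟩ := hconv
  obtain ⟨M, hM⟩ := Metric.tendsto_atTop.mp hL 1 one_pos
  refine ⟨γ '' Set.Icc 0 (max M 0) ∪ Metric.closedBall L 1, ?_, ?_⟩
  · exact (isCompact_Icc.image_of_continuousOn (hγc.mono Icc_subset_Ici_self)).union
      (isCompact_closedBall L 1)
  · intro t ht
    rcases le_or_gt t (max M 0) with hc | hc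
    · exact Or.inl ⟨t, ⟨ht, hc⟩, rfl⟩
    · exact Or.inr (Metric.mem_closedBall.mpr
        (le_of_lt (hM t ((le_max_left M 0).trans hc.le))))
end
end

section
/- Fix f_c ≥ 0 and suppose there exist constants k > 0 and ε > 0 such that ‖∇f_T(x)‖ ≥ k·|f_T(x) − f_c|^{3/4} for every x ∈ ℂⁿ with |f_T(x) − f_c| < ε. Then, with the same constants, ‖∇f_K(x)‖ ≥ k·|f_K(x) − f_c|^{3/4} for every x ∈ ℂⁿ with |f_K(x) − f_c| < ε. -/
open scoped Matrix

noncomputable section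

/-- Matrix-vector multiplication, viewed as a map on Euclidean space
(the fundamental vector field of a linear action). -/
def mulVecE {n : ℕ} (ξ : Matrix (Fin n) (Fin n) ℂ) (x : EuclideanSpace ℂ (Fin n)) :
    EuclideanSpace ℂ (Fin n) :=
  (WithLp.equiv 2 (Fin n → ℂ)).symm (ξ.mulVec (WithLp.equiv 2 (Fin n → ℂ) x))

/-- The real Frobenius inner product `⟪ξ,η⟫ = Re (tr (ξᴴ η))` on complex matrices. -/
def innK {n : ℕ} (ξ η : Matrix (Fin n) (Fin n) ℂ) : ℝ :=
  (Matrix.trace (ξᴴ * η)).re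

variable {n : ℕ}

lemma innK_expand (ξ η : Matrix (Fin n) (Fin n) ℂ) :
    innK ξ η = ∑ j, ∑ i, ((starRingEnd ℂ) (ξ i j) * η i j).re := by
  simp [innK, Matrix.trace, Matrix.mul_apply, Matrix.conjTranspose_apply, Matrix.diag,
    Complex.re_sum]

lemma innK_self (ξ : Matrix (Fin n) (Fin n) ℂ) :
    innK ξ ξ = ∑ j, ∑ i, Complex.normSq (ξ i j) := by
  rw [innK_expand]
  congr 1; ext j; congr 1; ext i
  simp [Complex.mul_re, Complex.normSq_apply]

lemma innK_self_nonneg (ξ : Matrix (Fin n) (Fin n) ℂ) : 0 ≤ innK ξ ξ := by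
  rw [innK_self]
  exact Finset.sum_nonneg fun j _ => Finset.sum_nonneg fun i _ => Complex.normSq_nonneg _

lemma eq_zero_of_innK_self (ξ : Matrix (Fin n) (Fin n) ℂ) (h : innK ξ ξ = 0) : ξ = 0 := by
  rw [innK_self] at h
  ext i j
  have h1 : ∀ j' ∈ Finset.univ, (0:ℝ) ≤ ∑ i', Complex.normSq (ξ i' j') := by
    intro j' _; exact Finset.sum_nonneg fun i' _ => Complex.normSq_nonneg _
  have h2 := (Finset.sum_eq_zero_iff_of_nonneg h1).mp h j (Finset.mem_univ j)
  have h3 : ∀ i' ∈ Finset.univ, (0:ℝ) ≤ Complex.normSq (ξ i' j) := by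
    intro i' _; exact Complex.normSq_nonneg _
  have := (Finset.sum_eq_zero_iff_of_nonneg h3).mp h2 i (Finset.mem_univ i)
  simpa [Complex.normSq_eq_zero] using this

lemma innK_comm (ξ η : Matrix (Fin n) (Fin n) ℂ) : innK ξ η = innK η ξ := by
  rw [innK_expand, innK_expand]
  congr 1; ext j; congr 1; ext i
  rw [← Complex.conj_re (starRingEnd ℂ (η i j) * ξ i j)]
  simp [mul_comm]

lemma innK_add_left (ξ ξ' η : Matrix (Fin n) (Fin n) ℂ) :
    innK (ξ + ξ') η = innK ξ η + innK ξ' η := by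
  simp [innK, Matrix.add_mul, Matrix.conjTranspose_add]

lemma innK_sub_left (ξ ξ' η : Matrix (Fin n) (Fin n) ℂ) :
    innK (ξ - ξ') η = innK ξ η - innK ξ' η := by
  simp [innK, Matrix.sub_mul, Matrix.conjTranspose_sub]

lemma innK_add_right (ξ η η' : Matrix (Fin n) (Fin n) ℂ) :
    innK ξ (η + η') = innK ξ η + innK ξ η' := by
  simp [innK, Matrix.mul_add]

lemma innK_sub_right (ξ η η' : Matrix (Fin n) (Fin n) ℂ) :
    innK ξ (η - η') = innK ξ η - innK ξ η' := by
  simp [innK, Matrix.mul_sub]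

lemma innK_conj_unitary (G : Matrix (Fin n) (Fin n) ℂ) (hG : G ∈ Matrix.unitaryGroup (Fin n) ℂ)
    (ξ η : Matrix (Fin n) (Fin n) ℂ) :
    innK (G * ξ * star G) η = innK ξ (star G * η * G) := by
  unfold innK
  have h1 : (G * ξ * star G)ᴴ = G * ξᴴ * star G := by
    simp [Matrix.conjTranspose_mul, Matrix.star_eq_conjTranspose, Matrix.mul_assoc]
  rw [h1]
  rw [show G * ξᴴ * star G * η = G * (ξᴴ * (star G * η)) by
    simp [Matrix.mul_assoc], Matrix.trace_mul_comm]
  congr 2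
  simp [Matrix.mul_assoc]

lemma mulVecE_eq_toEuclideanLin (M : Matrix (Fin n) (Fin n) ℂ) (x : EuclideanSpace ℂ (Fin n)) :
    mulVecE M x = Matrix.toEuclideanLin M x := (Matrix.toEuclideanLin_apply M x).symm

lemma mulVecE_mul (M N : Matrix (Fin n) (Fin n) ℂ) (x : EuclideanSpace ℂ (Fin n)) :
    mulVecE (M * N) x = mulVecE M (mulVecE N x) := by
  simp [mulVecE, Matrix.mulVec_mulVec]

lemma mulVecE_one (x : EuclideanSpace ℂ (Fin n)) : mulVecE 1 x = x := by
  simp [mulVecE]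

lemma mulVecE_smul (M : Matrix (Fin n) (Fin n) ℂ) (c : ℂ) (x : EuclideanSpace ℂ (Fin n)) :
    mulVecE M (c • x) = c • mulVecE M x := by
  simp [mulVecE_eq_toEuclideanLin, map_smul]

lemma mulVecE_sub (M : Matrix (Fin n) (Fin n) ℂ) (x y : EuclideanSpace ℂ (Fin n)) :
    mulVecE M (x - y) = mulVecE M x - mulVecE M y := by
  simp [mulVecE_eq_toEuclideanLin, map_sub]

lemma inner_mulVecE_left (M : Matrix (Fin n) (Fin n) ℂ) (x y : EuclideanSpace ℂ (Fin n)) :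
    (inner ℂ (mulVecE M x) y : ℂ) = inner ℂ x (mulVecE Mᴴ y) := by
  rw [mulVecE_eq_toEuclideanLin, mulVecE_eq_toEuclideanLin,
    Matrix.toEuclideanLin_conjTranspose_eq_adjoint]
  exact (LinearMap.adjoint_inner_right _ _ _).symm

lemma inner_mulVecE_unitary (G : Matrix (Fin n) (Fin n) ℂ)
    (hG : G ∈ Matrix.unitaryGroup (Fin n) ℂ) (x y : EuclideanSpace ℂ (Fin n)) :
    (inner ℂ (mulVecE G x) (mulVecE G y) : ℂ) = inner ℂ x y := by
  rw [inner_mulVecE_left, ← mulVecE_mul, ← Matrix.star_eq_conjTranspose,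
    (Matrix.mem_unitaryGroup_iff'.mp hG : star G * G = 1), mulVecE_one]

lemma mulVecE_apply (M : Matrix (Fin n) (Fin n) ℂ) (x : EuclideanSpace ℂ (Fin n)) (i : Fin n) :
    mulVecE M x i = ∑ j, M i j * x j := rfl

lemma norm_mulVecE_le (M : Matrix (Fin n) (Fin n) ℂ) (x : EuclideanSpace ℂ (Fin n)) :
    ‖mulVecE M x‖ ≤ Real.sqrt (innK M M) * ‖x‖ := by
  have hrow : ∀ i, ‖mulVecE M x i‖ ≤ Real.sqrt (∑ j, Complex.normSq (M i j)) * ‖x‖ := by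
    intro i
    set r : EuclideanSpace ℂ (Fin n) :=
      (WithLp.equiv 2 (Fin n → ℂ)).symm (fun j => (starRingEnd ℂ) (M i j)) with hr
    have h1 : (inner ℂ r x : ℂ) = mulVecE M x i := by
      rw [mulVecE_apply, PiLp.inner_apply]
      congr 1; ext j
      simp [hr, RCLike.inner_apply, mul_comm]
    have h2 := norm_inner_le_norm (𝕜 := ℂ) r x
    rw [h1] at h2
    refine h2.trans (mul_le_mul_of_nonneg_right ?_ (norm_nonneg x))
    rw [EuclideanSpace.norm_eq]
    apply le_of_eq
    congr 1
    apply Finset.sum_congr rfl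
    intro j _
    simp [hr, Complex.sq_norm, ← Complex.normSq_eq_norm_sq]
  have hnn : (0:ℝ) ≤ innK M M := innK_self_nonneg M
  rw [EuclideanSpace.norm_eq]
  rw [show Real.sqrt (innK M M) * ‖x‖ = Real.sqrt (innK M M * ‖x‖^2) by
    rw [Real.sqrt_mul hnn, Real.sqrt_sq (norm_nonneg x)]]
  apply Real.sqrt_le_sqrt
  rw [innK_self]
  rw [show (∑ j, ∑ i, Complex.normSq (M i j)) = ∑ i, ∑ j, Complex.normSq (M i j) from
    Finset.sum_comm]
  rw [Finset.sum_mul]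
  apply Finset.sum_le_sum
  intro i _
  have := hrow i
  have h3 : ‖mulVecE M x i‖^2 ≤ (Real.sqrt (∑ j, Complex.normSq (M i j)) * ‖x‖)^2 := by
    exact pow_le_pow_left₀ (norm_nonneg _) this 2
  calc ‖mulVecE M x i‖^2 ≤ (Real.sqrt (∑ j, Complex.normSq (M i j)) * ‖x‖)^2 := h3
    _ = (∑ j, Complex.normSq (M i j)) * ‖x‖^2 := by
        rw [mul_pow, Real.sq_sqrt (Finset.sum_nonneg fun j _ => Complex.normSq_nonneg _)]

lemma mulVecE_real_smul (M : Matrix (Fin n) (Fin n) ℂ) (r : ℝ) (x : EuclideanSpace ℂ (Fin n)) :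
    mulVecE M (r • x) = r • mulVecE M x := by
  have : r • x = (r : ℂ) • x := by
    ext i
    simp [Complex.real_smul]
  rw [this, mulVecE_smul]
  ext i
  simp [Complex.real_smul]

lemma mulVecE_add (M : Matrix (Fin n) (Fin n) ℂ) (x y : EuclideanSpace ℂ (Fin n)) :
    mulVecE M (x + y) = mulVecE M x + mulVecE M y := by
  simp [mulVecE_eq_toEuclideanLin, map_add]

/-- The real linear isometry equivalence given by a unitary matrix. -/
def unitaryIso (G : Matrix (Fin n) (Fin n) ℂ) (hG : G ∈ Matrix.unitaryGroup (Fin n) ℂ) :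
    EuclideanSpace ℂ (Fin n) ≃ₗᵢ[ℝ] EuclideanSpace ℂ (Fin n) where
  toFun x := mulVecE G x
  invFun x := mulVecE (star G) x
  map_add' x y := mulVecE_add G x y
  map_smul' r x := mulVecE_real_smul G r x
  left_inv x := by
    show mulVecE (star G) (mulVecE G x) = x
    rw [← mulVecE_mul, (Matrix.mem_unitaryGroup_iff'.mp hG : star G * G = 1), mulVecE_one]
  right_inv x := by
    show mulVecE G (mulVecE (star G) x) = x
    rw [← mulVecE_mul, (Matrix.mem_unitaryGroup_iff.mp hG : G * star G = 1), mulVecE_one]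
  norm_map' x := by
    show ‖mulVecE G x‖ = ‖x‖
    have h := inner_mulVecE_unitary G hG x x
    rw [norm_eq_sqrt_re_inner (𝕜 := ℂ), norm_eq_sqrt_re_inner (𝕜 := ℂ) x, h]

lemma norm_fderiv_comp_isometry (f : EuclideanSpace ℂ (Fin n) → ℝ)
    (A : EuclideanSpace ℂ (Fin n) ≃ₗᵢ[ℝ] EuclideanSpace ℂ (Fin n))
    (x : EuclideanSpace ℂ (Fin n)) :
    ‖fderiv ℝ (f ∘ A) x‖ = ‖fderiv ℝ f (A x)‖ := by
  by_cases hf : DifferentiableAt ℝ f (A x)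
  · have hA : DifferentiableAt ℝ A x := A.toContinuousLinearEquiv.differentiableAt
    rw [fderiv_comp x hf hA]
    have hfd : fderiv ℝ (⇑A) x = A.toLinearIsometry.toContinuousLinearMap := by
      have := A.toContinuousLinearEquiv.fderiv (x := x)
      rw [show ⇑A.toContinuousLinearEquiv = ⇑A from A.coe_toContinuousLinearEquiv] at this
      rw [this]; rfl
    rw [hfd]
    exact ContinuousLinearMap.opNorm_comp_linearIsometryEquiv _ _
  · have hfA : ¬ DifferentiableAt ℝ (f ∘ A) x := by
      intro hcomp
      apply hf
      have : f = (f ∘ A) ∘ A.symm := by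
        ext z; simp
      rw [this]
      have h2 : DifferentiableAt ℝ (f ∘ ⇑A) (A.symm (A x)) := by
        rw [A.symm_apply_apply]; exact hcomp
      exact h2.comp (A x) (A.symm.toContinuousLinearEquiv.differentiableAt)
    rw [fderiv_zero_of_not_differentiableAt hf, fderiv_zero_of_not_differentiableAt hfA]

lemma norm_gradient_eq_norm_fderiv (f : EuclideanSpace ℂ (Fin n) → ℝ)
    (x : EuclideanSpace ℂ (Fin n)) : ‖gradient f x‖ = ‖fderiv ℝ f x‖ := by
  unfold gradient
  exact LinearIsometryEquiv.norm_map _ _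

lemma gradient_eq_of_hasFDerivAt_sub_zero (f g : EuclideanSpace ℂ (Fin n) → ℝ)
    (y : EuclideanSpace ℂ (Fin n))
    (h : HasFDerivAt (fun z => f z - g z) (0 : EuclideanSpace ℂ (Fin n) →L[ℝ] ℝ) y) :
    gradient f y = gradient g y := by
  by_cases hg : DifferentiableAt ℝ g y
  · have hf : HasFDerivAt f (0 + fderiv ℝ g y) y := by
      have := h.add hg.hasFDerivAt
      exact this.congr_of_eventuallyEq (by filter_upwards with z; simp)
    unfold gradient
    rw [hf.fderiv, zero_add]
  · have hf : ¬ DifferentiableAt ℝ f y := by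
      intro hf
      apply hg
      have : g = fun z => f z - (f z - g z) := by ext z; ring
      rw [this]
      exact hf.sub h.differentiableAt
    unfold gradient
    rw [fderiv_zero_of_not_differentiableAt hf, fderiv_zero_of_not_differentiableAt hg]


/-- Reduction to a maximal torus: a Łojasiewicz inequality (with fixed
level `f_c`, exponent 3/4) for the norm-square of the moment map of the maximal torus
implies the same inequality, with the same constants, for the norm-square of the moment
map of the full group. -/
theorem stmt4 (n : ℕ) (𝔨 : Submodule ℝ (Matrix (Fin n) (Fin n) ℂ))
    (hskew : ∀ ξ ∈ 𝔨, ξᴴ = -ξ)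
    (hlie : ∀ ξ ∈ 𝔨, ∀ η ∈ 𝔨, ξ * η - η * ξ ∈ 𝔨)
    (α : Matrix (Fin n) (Fin n) ℂ) (hα : α ∈ 𝔨)
    (hcentral : ∀ ξ ∈ 𝔨, α * ξ = ξ * α)
    (μ : EuclideanSpace ℂ (Fin n) → Matrix (Fin n) (Fin n) ℂ)
    (hμmem : ∀ x, μ x ∈ 𝔨)
    (hμ : ∀ x, ∀ ξ ∈ 𝔨,
      innK (μ x) ξ
        = (1/2) * (inner ℂ (Complex.I • mulVecE ξ x) x : ℂ).re - innK α ξ)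
    -- the compact group `K ⊆ U(n)`, normalizing `𝔨` and fixing `α`
    (K : Subgroup (Matrix.unitaryGroup (Fin n) ℂ))
    (hKconj : ∀ g : K, ∀ ξ ∈ 𝔨,
      ((g : Matrix.unitaryGroup (Fin n) ℂ) : Matrix (Fin n) (Fin n) ℂ) * ξ *
        ((g⁻¹ : Matrix.unitaryGroup (Fin n) ℂ) : Matrix (Fin n) (Fin n) ℂ) ∈ 𝔨)
    (hKα : ∀ g : K,
      ((g : Matrix.unitaryGroup (Fin n) ℂ) : Matrix (Fin n) (Fin n) ℂ) * α *
        ((g⁻¹ : Matrix.unitaryGroup (Fin n) ℂ) : Matrix (Fin n) (Fin n) ℂ) = α)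
    -- the maximal torus: a Lie subalgebra `𝔱 ⊆ 𝔨` meeting every adjoint orbit of `μ`
    (𝔱 : Submodule ℝ (Matrix (Fin n) (Fin n) ℂ)) (h𝔱𝔨 : 𝔱 ≤ 𝔨)
    (h𝔱lie : ∀ ξ ∈ 𝔱, ∀ η ∈ 𝔱, ξ * η - η * ξ ∈ 𝔱)
    (hmax : ∀ x : EuclideanSpace ℂ (Fin n), ∃ g : K,
      ((g : Matrix.unitaryGroup (Fin n) ℂ) : Matrix (Fin n) (Fin n) ℂ) * μ x *
        ((g⁻¹ : Matrix.unitaryGroup (Fin n) ℂ) : Matrix (Fin n) (Fin n) ℂ) ∈ 𝔱)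
    -- the orthogonal projection `P𝔱 : 𝔨 → 𝔱`
    (P𝔱 : Matrix (Fin n) (Fin n) ℂ → Matrix (Fin n) (Fin n) ℂ)
    (hPmem : ∀ ξ, P𝔱 ξ ∈ 𝔱)
    (hPperp : ∀ ξ ∈ 𝔨, ∀ η ∈ 𝔱, innK (ξ - P𝔱 ξ) η = 0)
    -- the two functions `f_K = ‖μ‖²` and `f_T = ‖P𝔱 ∘ μ‖²`
    (fK fT : EuclideanSpace ℂ (Fin n) → ℝ)
    (hfK : ∀ x, fK x = innK (μ x) (μ x))
    (hfT : ∀ x, fT x = innK (P𝔱 (μ x)) (P𝔱 (μ x)))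
    (fc : ℝ) (hfc : 0 ≤ fc)
    (k ε : ℝ) (hk : 0 < k) (hε : 0 < ε)
    (hT : ∀ x : EuclideanSpace ℂ (Fin n),
      |fT x - fc| < ε → ‖gradient fT x‖ ≥ k * |fT x - fc| ^ ((3:ℝ)/4)) :
    ∀ x : EuclideanSpace ℂ (Fin n),
      |fK x - fc| < ε → ‖gradient fK x‖ ≥ k * |fK x - fc| ^ ((3:ℝ)/4) := by
  intro x hx
  obtain ⟨g, hgT⟩ := hmax x
  set G : Matrix (Fin n) (Fin n) ℂ :=
    ((g : Matrix.unitaryGroup (Fin n) ℂ) : Matrix (Fin n) (Fin n) ℂ) with hGdef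
  have hGmem : G ∈ Matrix.unitaryGroup (Fin n) ℂ := (g : Matrix.unitaryGroup (Fin n) ℂ).2
  have hinv : ((g⁻¹ : Matrix.unitaryGroup (Fin n) ℂ) : Matrix (Fin n) (Fin n) ℂ) = star G := rfl
  have hGG : star G * G = 1 := Matrix.mem_unitaryGroup_iff'.mp hGmem
  have hGG' : G * star G = 1 := Matrix.mem_unitaryGroup_iff.mp hGmem
  have hKconjG : ∀ ξ ∈ 𝔨, G * ξ * star G ∈ 𝔨 := by
    intro ξ hξ
    have := hKconj g ξ hξ
    rwa [hinv] at this
  have hKconjG' : ∀ ξ ∈ 𝔨, star G * ξ * G ∈ 𝔨 := by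
    intro ξ hξ
    have := hKconj g⁻¹ ξ hξ
    simpa using this
  have hKαG : G * α * star G = α := by
    have := hKα g
    rwa [hinv] at this
  have hαconj : ∀ ξ, innK α (star G * ξ * G) = innK α ξ := by
    intro ξ
    rw [← innK_conj_unitary G hGmem α ξ, hKαG]
  -- equivariance of the moment map
  have hequiv : ∀ z, μ (mulVecE G z) = G * μ z * star G := by
    intro z
    have hζK : μ (mulVecE G z) - G * μ z * star G ∈ 𝔨 :=
      Submodule.sub_mem _ (hμmem _) (hKconjG _ (hμmem z))
    have hzero : ∀ ξ ∈ 𝔨, innK (μ (mulVecE G z) - G * μ z * star G) ξ = 0 := by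
      intro ξ hξ
      have hconjmem : star G * ξ * G ∈ 𝔨 := hKconjG' ξ hξ
      have hi : (inner ℂ (Complex.I • mulVecE ξ (mulVecE G z)) (mulVecE G z) : ℂ)
          = inner ℂ (Complex.I • mulVecE (star G * ξ * G) z) z := by
        rw [← mulVecE_mul]
        rw [show ξ * G = G * (star G * ξ * G) by
          rw [← Matrix.mul_assoc, ← Matrix.mul_assoc, hGG', Matrix.one_mul]]
        rw [mulVecE_mul, ← mulVecE_smul]
        exact inner_mulVecE_unitary G hGmem _ _
      have h1 : innK (μ (mulVecE G z)) ξ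
          = (1/2) * (inner ℂ (Complex.I • mulVecE (star G * ξ * G) z) z : ℂ).re - innK α ξ := by
        rw [hμ (mulVecE G z) ξ hξ, hi]
      have h2 : innK (G * μ z * star G) ξ
          = (1/2) * (inner ℂ (Complex.I • mulVecE (star G * ξ * G) z) z : ℂ).re - innK α ξ := by
        rw [innK_conj_unitary G hGmem, hμ z _ hconjmem, hαconj]
      rw [innK_sub_left, h1, h2]
      ring
    have hzz := hzero _ hζK
    have := eq_zero_of_innK_self _ hzz
    exact sub_eq_zero.mp this
  -- invariance of fK
  have hfKinv : ∀ z, fK (mulVecE G z) = fK z := by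
    intro z
    rw [hfK, hfK, hequiv z, innK_conj_unitary G hGmem]
    congr 1
    rw [show star G * (G * μ z * star G) * G
        = (star G * G) * μ z * (star G * G) by simp [Matrix.mul_assoc], hGG,
      Matrix.one_mul, Matrix.mul_one]
  set y : EuclideanSpace ℂ (Fin n) := mulVecE G x with hy
  have hμyT : μ y ∈ 𝔱 := by
    rw [hy, hequiv x]
    rwa [hinv] at hgT
  have hPfix : P𝔱 (μ y) = μ y := by
    have hd : μ y - P𝔱 (μ y) ∈ 𝔱 := Submodule.sub_mem _ hμyT (hPmem _)
    have h0 := hPperp (μ y) (h𝔱𝔨 hμyT) _ hd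
    have := eq_zero_of_innK_self _ h0
    exact (sub_eq_zero.mp this).symm
  have hfTy : fT y = fK x := by
    rw [hfT, hPfix, ← hfK, hy]
    exact hfKinv x
  -- h := fK - fT facts
  have hd_perp : ∀ z, ∀ η ∈ 𝔱, innK (μ z - P𝔱 (μ z)) η = 0 := fun z => hPperp (μ z) (hμmem z)
  have hh_eq : ∀ z, fK z - fT z = innK (μ z - P𝔱 (μ z)) (μ z - P𝔱 (μ z)) := by
    intro z
    have h1 : innK (μ z - P𝔱 (μ z)) (P𝔱 (μ z)) = 0 := hd_perp z _ (hPmem _)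
    have h2 : innK (P𝔱 (μ z)) (μ z - P𝔱 (μ z)) = 0 := by rw [innK_comm]; exact h1
    have hsplit : μ z = (μ z - P𝔱 (μ z)) + P𝔱 (μ z) := by abel
    rw [hfK, hfT]
    calc innK (μ z) (μ z) - innK (P𝔱 (μ z)) (P𝔱 (μ z))
        = innK ((μ z - P𝔱 (μ z)) + P𝔱 (μ z)) ((μ z - P𝔱 (μ z)) + P𝔱 (μ z))
            - innK (P𝔱 (μ z)) (P𝔱 (μ z)) := by rw [← hsplit]
      _ = innK (μ z - P𝔱 (μ z)) (μ z - P𝔱 (μ z)) := by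
          rw [innK_add_left, innK_add_right, innK_add_right, h1, h2]
          ring
  have hh_nonneg : ∀ z, 0 ≤ fK z - fT z := by
    intro z
    rw [hh_eq z]
    exact innK_self_nonneg _
  have hh_y : fK y - fT y = 0 := by
    rw [hh_eq y, hPfix]
    simp [innK]
  -- the quadratic bound
  have hbound : ∀ z, fK z - fT z ≤ ((‖z‖ + ‖y‖)/2 * ‖z - y‖)^2 := by
    intro z
    set e : Matrix (Fin n) (Fin n) ℂ := μ z - μ y with he
    have heK : e ∈ 𝔨 := Submodule.sub_mem _ (hμmem z) (hμmem y)
    set d : Matrix (Fin n) (Fin n) ℂ := μ z - P𝔱 (μ z) with hd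
    -- innK d d ≤ innK e e
    have hed : e - d = P𝔱 (μ z) - μ y := by rw [he, hd]; abel
    have h1 : innK d (e - d) = 0 := by
      rw [hed]; exact hd_perp z _ (Submodule.sub_mem _ (hPmem _) hμyT)
    have h2 : innK (e - d) d = 0 := by rw [innK_comm]; exact h1
    have hdd_le : innK d d ≤ innK e e := by
      have hsplit : e = d + (e - d) := by abel
      calc innK d d ≤ innK d d + innK (e - d) (e - d) := by
            have := innK_self_nonneg (e - d); linarith
        _ = innK (d + (e - d)) (d + (e - d)) := by
            rw [innK_add_left, innK_add_right, innK_add_right, h1, h2]; ring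
        _ = innK e e := by rw [← hsplit]
    -- Lipschitz-type bound on innK e e
    have hee : innK e e ≤ (‖z‖ + ‖y‖)/2 * ‖z - y‖ * Real.sqrt (innK e e) := by
      have hμz := hμ z e heK
      have hμy := hμ y e heK
      have hse : innK e e = innK (μ z) e - innK (μ y) e := by
        rw [← innK_sub_left]
      have hinnsplit : (inner ℂ (Complex.I • mulVecE e z) z : ℂ)
          - (inner ℂ (Complex.I • mulVecE e y) y : ℂ)
          = inner ℂ (Complex.I • mulVecE e (z - y)) z
            + inner ℂ (Complex.I • mulVecE e y) (z - y) := by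
        rw [mulVecE_sub, smul_sub, inner_sub_left, inner_sub_right]
        ring
      have hre : innK e e = (1/2) * ((inner ℂ (Complex.I • mulVecE e (z - y)) z : ℂ)
            + (inner ℂ (Complex.I • mulVecE e y) (z - y) : ℂ)).re := by
        rw [hse, hμz, hμy, ← hinnsplit]
        rw [Complex.sub_re]
        ring
      have hb1 : ‖(inner ℂ (Complex.I • mulVecE e (z - y)) z : ℂ)‖
          ≤ Real.sqrt (innK e e) * ‖z - y‖ * ‖z‖ := by
        refine (norm_inner_le_norm _ _).trans ?_
        have : ‖Complex.I • mulVecE e (z - y)‖ = ‖mulVecE e (z - y)‖ := by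
          rw [norm_smul]; simp
        rw [this]
        exact mul_le_mul_of_nonneg_right (norm_mulVecE_le e (z - y)) (norm_nonneg z)
      have hb2 : ‖(inner ℂ (Complex.I • mulVecE e y) (z - y) : ℂ)‖
          ≤ Real.sqrt (innK e e) * ‖y‖ * ‖z - y‖ := by
        refine (norm_inner_le_norm _ _).trans ?_
        have : ‖Complex.I • mulVecE e y‖ = ‖mulVecE e y‖ := by
          rw [norm_smul]; simp
        rw [this]
        exact mul_le_mul_of_nonneg_right (norm_mulVecE_le e y) (norm_nonneg _)
      have habs : ((inner ℂ (Complex.I • mulVecE e (z - y)) z : ℂ)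
            + (inner ℂ (Complex.I • mulVecE e y) (z - y) : ℂ)).re
          ≤ Real.sqrt (innK e e) * ‖z - y‖ * ‖z‖ + Real.sqrt (innK e e) * ‖y‖ * ‖z - y‖ := by
        have hre1 := Complex.abs_re_le_norm ((inner ℂ (Complex.I • mulVecE e (z - y)) z : ℂ)
            + (inner ℂ (Complex.I • mulVecE e y) (z - y) : ℂ))
        have htri := norm_add_le (inner ℂ (Complex.I • mulVecE e (z - y)) z : ℂ)
            (inner ℂ (Complex.I • mulVecE e y) (z - y) : ℂ)
        have : |((inner ℂ (Complex.I • mulVecE e (z - y)) z : ℂ)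
            + (inner ℂ (Complex.I • mulVecE e y) (z - y) : ℂ)).re|
            ≤ Real.sqrt (innK e e) * ‖z - y‖ * ‖z‖ + Real.sqrt (innK e e) * ‖y‖ * ‖z - y‖ := by
          calc |((inner ℂ (Complex.I • mulVecE e (z - y)) z : ℂ)
              + (inner ℂ (Complex.I • mulVecE e y) (z - y) : ℂ)).re|
              ≤ ‖(inner ℂ (Complex.I • mulVecE e (z - y)) z : ℂ)
                + (inner ℂ (Complex.I • mulVecE e y) (z - y) : ℂ)‖ := by
                  exact Complex.abs_re_le_norm _
            _ ≤ ‖(inner ℂ (Complex.I • mulVecE e (z - y)) z : ℂ)‖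
                + ‖(inner ℂ (Complex.I • mulVecE e y) (z - y) : ℂ)‖ := htri
            _ ≤ _ := add_le_add hb1 hb2
        exact (abs_le.mp this).2
      have h5 : innK e e ≤ (1/2) * (Real.sqrt (innK e e) * ‖z - y‖ * ‖z‖
          + Real.sqrt (innK e e) * ‖y‖ * ‖z - y‖) := by
        calc innK e e = (1/2) * ((inner ℂ (Complex.I • mulVecE e (z - y)) z : ℂ)
              + (inner ℂ (Complex.I • mulVecE e y) (z - y) : ℂ)).re := hre
          _ ≤ (1/2) * (Real.sqrt (innK e e) * ‖z - y‖ * ‖z‖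
              + Real.sqrt (innK e e) * ‖y‖ * ‖z - y‖) := by linarith
      refine h5.trans (le_of_eq ?_)
      ring
    -- conclude innK e e ≤ c^2
    have hc0 : 0 ≤ (‖z‖ + ‖y‖)/2 * ‖z - y‖ := by positivity
    have hs0 : 0 ≤ innK e e := innK_self_nonneg e
    have hsq : Real.sqrt (innK e e) ^ 2 = innK e e := Real.sq_sqrt hs0
    have hee2 : innK e e ≤ ((‖z‖ + ‖y‖)/2 * ‖z - y‖)^2 := by
      nlinarith [sq_nonneg (Real.sqrt (innK e e) - (‖z‖ + ‖y‖)/2 * ‖z - y‖),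
        Real.sqrt_nonneg (innK e e)]
    calc fK z - fT z = innK d d := hh_eq z
      _ ≤ innK e e := hdd_le
      _ ≤ _ := hee2
  -- HasFDerivAt (fK - fT) 0 y
  have hfderiv : HasFDerivAt (fun z => fK z - fT z)
      (0 : EuclideanSpace ℂ (Fin n) →L[ℝ] ℝ) y := by
    rw [hasFDerivAt_iff_isLittleO]
    have hsimp : (fun z => (fK z - fT z) - (fK y - fT y)
        - (0 : EuclideanSpace ℂ (Fin n) →L[ℝ] ℝ) (z - y)) = fun z => fK z - fT z := by
      ext z
      rw [hh_y]
      simp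
    rw [hsimp]
    rw [Asymptotics.isLittleO_iff]
    intro c hc
    set B : ℝ := ((2 * ‖y‖ + 1)/2)^2 + 1 with hB
    have hBpos : 0 < B := by positivity
    set δ : ℝ := min 1 (c / B) with hδ
    have hδpos : 0 < δ := lt_min one_pos (div_pos hc hBpos)
    filter_upwards [Metric.ball_mem_nhds y hδpos] with z hz
    rw [Metric.mem_ball, dist_eq_norm] at hz
    have hz1 : ‖z - y‖ < 1 := lt_of_lt_of_le hz (min_le_left _ _)
    have hz2 : ‖z - y‖ < c / B := lt_of_lt_of_le hz (min_le_right _ _)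
    have hznorm : ‖z‖ ≤ ‖y‖ + 1 := by
      have := norm_sub_norm_le z y
      linarith
    have hb := hbound z
    have hcoef : (‖z‖ + ‖y‖)/2 ≤ (2 * ‖y‖ + 1)/2 := by linarith
    have hcoef0 : 0 ≤ (‖z‖ + ‖y‖)/2 := by positivity
    have hkey : fK z - fT z ≤ ((2 * ‖y‖ + 1)/2)^2 * (‖z - y‖ * ‖z - y‖) := by
      calc fK z - fT z ≤ ((‖z‖ + ‖y‖)/2 * ‖z - y‖)^2 := hb
        _ ≤ ((2 * ‖y‖ + 1)/2 * ‖z - y‖)^2 := by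
            apply pow_le_pow_left₀ (by positivity)
            exact mul_le_mul_of_nonneg_right hcoef (norm_nonneg _)
        _ = ((2 * ‖y‖ + 1)/2)^2 * (‖z - y‖ * ‖z - y‖) := by ring
    have hnn := hh_nonneg z
    rw [Real.norm_eq_abs, abs_of_nonneg hnn]
    calc fK z - fT z ≤ ((2 * ‖y‖ + 1)/2)^2 * (‖z - y‖ * ‖z - y‖) := hkey
      _ ≤ B * (‖z - y‖ * ‖z - y‖) := by
          apply mul_le_mul_of_nonneg_right _ (by positivity)
          rw [hB]; linarith
      _ = (B * ‖z - y‖) * ‖z - y‖ := by ring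
      _ ≤ c * ‖z - y‖ := by
          apply mul_le_mul_of_nonneg_right _ (norm_nonneg _)
          calc B * ‖z - y‖ ≤ B * (c / B) := by
                exact mul_le_mul_of_nonneg_left (le_of_lt hz2) (le_of_lt hBpos)
            _ = c := by field_simp
      _ ≤ c * ‖z - y‖ := le_refl _
  have hgrad_eq : gradient fK y = gradient fT y :=
    gradient_eq_of_hasFDerivAt_sub_zero fK fT y hfderiv
  -- ‖gradient fK x‖ = ‖gradient fK y‖
  have hnormgrad : ‖gradient fK x‖ = ‖gradient fK y‖ := by
    set A := unitaryIso G hGmem with hA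
    have hcomp : fK ∘ ⇑A = fK := by
      ext z
      exact hfKinv z
    rw [norm_gradient_eq_norm_fderiv, norm_gradient_eq_norm_fderiv]
    have h := norm_fderiv_comp_isometry fK A x
    rw [hcomp] at h
    exact h
  -- conclude
  have hTy := hT y (by rw [hfTy]; exact hx)
  rw [hfTy] at hTy
  rw [hnormgrad, hgrad_eq]
  exact hTy
end
end

section
/- Fix f_c ≥ 0 and suppose that for every μ_c ∈ 𝔨 with ‖μ_c‖² = f_c there exist constants ε′ > 0 and c′ > 0 (depending on μ_c) such that ‖∇f(x)‖ ≥ c′·|f(x) − f_c|^{3/4} whenever ‖μ(x) − μ_c‖ < ε′. Then there exist constants ε > 0 and c > 0 such that ‖∇f(x)‖ ≥ c·|f(x) − f_c|^{3/4} whenever |f(x) − f_c| < ε. -/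
noncomputable section

/-- If the Łojasiewicz inequality for `f = ‖μ‖²` at level `f_c` holds
locally near each `μ_c` in `𝔨` with `‖μ_c‖² = f_c`, then it holds globally on the set
`|f - f_c| < ε`. -/
theorem stmt5 {E 𝔨 : Type*}
    [NormedAddCommGroup E] [InnerProductSpace ℝ E] [FiniteDimensional ℝ E]
    [NormedAddCommGroup 𝔨] [InnerProductSpace ℝ 𝔨] [FiniteDimensional ℝ 𝔨]
    (μ : E → 𝔨) (hμ : Differentiable ℝ μ)
    (f : E → ℝ) (hf : ∀ x, f x = ‖μ x‖ ^ 2)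
    (fc : ℝ) (hfc : 0 ≤ fc)
    (hloc : ∀ μc : 𝔨, ‖μc‖ ^ 2 = fc → ∃ ε' > (0:ℝ), ∃ c' > (0:ℝ), ∀ x : E,
      ‖μ x - μc‖ < ε' → ‖gradient f x‖ ≥ c' * |f x - fc| ^ ((3:ℝ)/4)) :
    ∃ ε > (0:ℝ), ∃ c > (0:ℝ), ∀ x : E,
      |f x - fc| < ε → ‖gradient f x‖ ≥ c * |f x - fc| ^ ((3:ℝ)/4) := by
  rcases eq_or_lt_of_le hfc with h0 | hpos
  · -- case fc = 0
    obtain ⟨ε', hε', c', hc', H⟩ := hloc 0 (by simp [← h0])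
    refine ⟨ε' ^ 2, by positivity, c', hc', fun x hx => ?_⟩
    apply H
    rw [sub_zero]
    have h1 : ‖μ x‖ ^ 2 < ε' ^ 2 := by
      have h2 : |f x - fc| = ‖μ x‖ ^ 2 := by
        rw [hf, ← h0, sub_zero, abs_of_nonneg (by positivity)]
      linarith [hx, h2 ▸ hx]
    exact lt_of_pow_lt_pow_left₀ 2 hε'.le h1
  · rcases subsingleton_or_nontrivial 𝔨 with hs | hn
    · -- 𝔨 trivial, fc > 0 : vacuous
      refine ⟨fc, hpos, 1, one_pos, fun x hx => ?_⟩
      exfalso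
      have hz : μ x = 0 := Subsingleton.elim _ _
      rw [hf, hz, norm_zero] at hx
      have h2 : (0:ℝ) ^ 2 - fc = -fc := by ring
      rw [h2, abs_neg, abs_of_pos hpos] at hx
      exact lt_irrefl _ hx
    · -- main case
      set r := Real.sqrt fc with hr_def
      have hr : 0 < r := Real.sqrt_pos.2 hpos
      have hr2 : r ^ 2 = fc := Real.sq_sqrt hfc
      -- total choice functions
      have hloc' : ∀ v : 𝔨, ∃ e > (0:ℝ), ∃ c > (0:ℝ), ‖v‖ ^ 2 = fc → ∀ x : E,
          ‖μ x - v‖ < e → ‖gradient f x‖ ≥ c * |f x - fc| ^ ((3:ℝ)/4) := by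
        intro v
        by_cases h : ‖v‖ ^ 2 = fc
        · obtain ⟨e, he, c, hc, H⟩ := hloc v h
          exact ⟨e, he, c, hc, fun _ => H⟩
        · exact ⟨1, one_pos, 1, one_pos, fun h' => absurd h' h⟩
      choose ε' hε' c' hc' H using hloc'
      -- compact sphere and finite subcover
      have hK : IsCompact (Metric.sphere (0:𝔨) r) := isCompact_sphere _ _
      obtain ⟨t, htK, htcov⟩ := hK.elim_nhds_subcover
        (fun v => Metric.ball v (ε' v / 2))
        (fun v _ => Metric.ball_mem_nhds v (half_pos (hε' v)))
      -- sphere nonempty ⇒ t nonempty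
      obtain ⟨v0, hv0⟩ := exists_norm_eq 𝔨 hr.le
      have hv0K : v0 ∈ Metric.sphere (0:𝔨) r := by
        simp [mem_sphere_zero_iff_norm, hv0]
      have ht : t.Nonempty := by
        rcases Set.mem_iUnion₂.1 (htcov hv0K) with ⟨w, hw, _⟩
        exact ⟨w, hw⟩
      set δ : ℝ := t.inf' ht (fun v => ε' v / 2) with hδ_def
      have hδ : 0 < δ := by
        rw [hδ_def, Finset.lt_inf'_iff]
        intro v _; exact half_pos (hε' v)
      set c : ℝ := t.inf' ht c' with hc_def
      have hc : 0 < c := by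
        rw [hc_def, Finset.lt_inf'_iff]
        intro v _; exact hc' v
      refine ⟨δ * r, by positivity, c, hc, fun x hx => ?_⟩
      -- |‖μ x‖ - r| < δ
      have ha : |‖μ x‖ - r| < δ := by
        have h1 : |‖μ x‖ - r| * r ≤ |‖μ x‖ ^ 2 - fc| := by
          rw [← hr2]
          have : ‖μ x‖ ^ 2 - r ^ 2 = (‖μ x‖ - r) * (‖μ x‖ + r) := by ring
          rw [this, abs_mul]
          have h2 : r ≤ |‖μ x‖ + r| := by
            rw [abs_of_nonneg (by positivity)]
            linarith [norm_nonneg (μ x)]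
          exact mul_le_mul_of_nonneg_left h2 (abs_nonneg _)
        have h3 : |‖μ x‖ ^ 2 - fc| < δ * r := by rw [← hf]; exact hx
        nlinarith
      -- find v on the sphere near μ x
      have hv : ∃ v : 𝔨, ‖v‖ = r ∧ ‖μ x - v‖ < δ := by
        by_cases hμ0 : μ x = 0
        · refine ⟨v0, hv0, ?_⟩
          rw [hμ0, zero_sub, norm_neg, hv0]
          have := ha
          rw [hμ0, norm_zero, zero_sub, abs_neg, abs_of_pos hr] at this
          exact this
        · have hnpos : 0 < ‖μ x‖ := norm_pos_iff.2 hμ0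
          refine ⟨(r * ‖μ x‖⁻¹) • μ x, ?_, ?_⟩
          · rw [norm_smul, Real.norm_eq_abs, abs_of_pos (by positivity)]
            field_simp
          · have : μ x - (r * ‖μ x‖⁻¹) • μ x = (1 - r * ‖μ x‖⁻¹) • μ x := by
              rw [sub_smul, one_smul]
            rw [this, norm_smul, Real.norm_eq_abs]
            have heq : |1 - r * ‖μ x‖⁻¹| * ‖μ x‖ = |‖μ x‖ - r| := by
              rw [← abs_of_pos hnpos, ← abs_mul]
              congr 1
              field_simp
              rw [abs_of_pos hnpos]; ring
            rw [heq]
            exact ha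
      obtain ⟨v, hvn, hvclose⟩ := hv
      have hvK : v ∈ Metric.sphere (0:𝔨) r := by simp [mem_sphere_zero_iff_norm, hvn]
      rcases Set.mem_iUnion₂.1 (htcov hvK) with ⟨w, hwt, hwball⟩
      have hw2 : ‖w‖ ^ 2 = fc := by
        have := htK w hwt
        rw [mem_sphere_zero_iff_norm] at this
        rw [this, hr2]
      have hδle : δ ≤ ε' w / 2 := Finset.inf'_le _ hwt
      have hcle : c ≤ c' w := Finset.inf'_le _ hwt
      have hclose : ‖μ x - w‖ < ε' w := by
        have h4 : ‖μ x - w‖ ≤ ‖μ x - v‖ + ‖v - w‖ := norm_sub_le_norm_sub_add_norm_sub _ _ _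
        have h5 : ‖v - w‖ < ε' w / 2 := by
          rw [Metric.mem_ball, dist_eq_norm] at hwball
          exact hwball
        linarith
      have := H w hw2 x hclose
      calc c * |f x - fc| ^ ((3:ℝ)/4)
          ≤ c' w * |f x - fc| ^ ((3:ℝ)/4) :=
            mul_le_mul_of_nonneg_right hcle (Real.rpow_nonneg (abs_nonneg _) _)
        _ ≤ ‖gradient f x‖ := this
end
end

section
/- For every φ_c in the image of φ there exist constants c > 0 and ε > 0 such that ‖v‖·‖φ(v)‖² ≥ c·| ‖φ(v)‖² − ‖φ_c‖² |^{3/2} for every v ∈ V₁ with ‖φ(v) − φ_c‖ < ε. -/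
noncomputable section

lemma rpow_three_halves_eq (x : ℝ) (hx : 0 ≤ x) :
    x ^ ((3:ℝ)/2) = Real.sqrt x * x := by
  rcases eq_or_lt_of_le hx with h | h
  · rw [← h]; simp [Real.zero_rpow]
  · have h32 : (3:ℝ)/2 = 1/2 + 1 := by norm_num
    rw [h32, Real.rpow_add h, Real.rpow_one, Real.sqrt_eq_rpow]

lemma sq_rpow_three_halves (x : ℝ) (hx : 0 ≤ x) :
    (x ^ 2) ^ ((3:ℝ)/2) = x ^ 3 := by
  rw [← Real.rpow_natCast x 2, ← Real.rpow_mul hx]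
  norm_num

set_option maxHeartbeats 1000000 in
/-- The affine-map estimate: for `φ(v) = Av − α` and any `φ_c` in the
image of `φ`, one has `‖v‖·‖φ(v)‖² ≥ c·|‖φ(v)‖² − ‖φ_c‖²|^{3/2}` near the level `φ_c`. -/
theorem stmt10 {V₁ V₂ : Type*}
    [NormedAddCommGroup V₁] [InnerProductSpace ℝ V₁] [FiniteDimensional ℝ V₁]
    [NormedAddCommGroup V₂] [InnerProductSpace ℝ V₂] [FiniteDimensional ℝ V₂]
    (A : V₁ →ₗ[ℝ] V₂) (α : V₂)
    (φ : V₁ → V₂) (hφ : ∀ v, φ v = A v - α)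
    (φc : V₂) (hφc : φc ∈ Set.range φ) :
    ∃ c > (0:ℝ), ∃ ε > (0:ℝ), ∀ v : V₁, ‖φ v - φc‖ < ε →
      ‖v‖ * ‖φ v‖ ^ 2 ≥ c * |‖φ v‖ ^ 2 - ‖φc‖ ^ 2| ^ ((3:ℝ)/2) := by
  clear hφc
  set B := LinearMap.toContinuousLinearMap A with hBdef
  set N := ‖B‖ with hNdef
  have hN0 : (0:ℝ) ≤ N := norm_nonneg _
  have hAle : ∀ v : V₁, ‖A v‖ ≤ N * ‖v‖ := by
    intro v
    have := B.le_opNorm v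
    simpa [hBdef] using this
  -- Key lemma: a lower bound on ‖v‖ in terms of ‖φ v - φc‖ near φc
  obtain ⟨c₀, hc₀, ε₀, hε₀, hB⟩ :
      ∃ c₀ > (0:ℝ), ∃ ε₀ > (0:ℝ), ∀ v : V₁, ‖φ v - φc‖ < ε₀ →
        c₀ * ‖φ v - φc‖ ≤ ‖v‖ := by
    by_cases h : φc = -α
    · refine ⟨1/(N+1), by positivity, 1, one_pos, fun v _ => ?_⟩
      have h1 : φ v - φc = A v := by rw [hφ, h]; abel
      rw [h1, one_div, inv_mul_le_iff₀ (by positivity)]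
      have := hAle v
      nlinarith [norm_nonneg v]
    · have hd : (0:ℝ) < ‖φc + α‖ := by
        rw [norm_pos_iff]
        intro hcon
        exact h (by linear_combination (norm := module) hcon)
      set d := ‖φc + α‖ with hddef
      refine ⟨1/(N+1), by positivity, d/2, by positivity, fun v hv => ?_⟩
      have hle : d ≤ ‖φ v - φc‖ + ‖A v‖ := by
        have h2 : φc + α = (φc - φ v) + A v := by rw [hφ]; abel
        calc d = ‖(φc - φ v) + A v‖ := by rw [hddef, h2]
        _ ≤ ‖φc - φ v‖ + ‖A v‖ := norm_add_le _ _
        _ = ‖φ v - φc‖ + ‖A v‖ := by rw [norm_sub_rev]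
      have hAv := hAle v
      have hv2 : d/2 < (N+1) * ‖v‖ := by nlinarith [norm_nonneg v]
      rw [one_div, inv_mul_le_iff₀ (by positivity)]
      nlinarith
  by_cases hp : φc = 0
  · refine ⟨c₀, hc₀, ε₀, hε₀, fun v hv => ?_⟩
    have hBv := hB v hv
    rw [hp, sub_zero] at hBv
    rw [hp, norm_zero]
    have hx : (0:ℝ) ≤ ‖φ v‖ := norm_nonneg _
    have habs : |‖φ v‖ ^ 2 - 0 ^ 2| = ‖φ v‖ ^ 2 := by
      rw [show ‖φ v‖ ^ 2 - 0 ^ 2 = ‖φ v‖ ^ 2 by ring, abs_of_nonneg (by positivity)]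
    rw [habs, sq_rpow_three_halves _ hx]
    nlinarith [sq_nonneg ‖φ v‖]
  · set p := ‖φc‖ with hpdef
    have hp0 : (0:ℝ) < p := norm_pos_iff.mpr hp
    set S := Real.sqrt ((p/2) * (5*p/2)) with hSdef
    have hS0 : (0:ℝ) ≤ S := Real.sqrt_nonneg _
    refine ⟨c₀ * (p^2/4) / (S * (5*p/2) + 1), by positivity,
      min ε₀ (p/2), lt_min hε₀ (by linarith), fun v hv => ?_⟩
    set c := c₀ * (p^2/4) / (S * (5*p/2) + 1) with hcdef
    have hc0 : (0:ℝ) < c := by rw [hcdef]; positivity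
    have hv1 : ‖φ v - φc‖ < ε₀ := lt_of_lt_of_le hv (min_le_left _ _)
    have hv2 : ‖φ v - φc‖ < p/2 := lt_of_lt_of_le hv (min_le_right _ _)
    have ht0 : (0:ℝ) ≤ ‖φ v - φc‖ := norm_nonneg _
    set t := ‖φ v - φc‖ with htdef
    set x := ‖φ v‖ with hxdef
    have hxp : |x - p| ≤ t := by
      have := abs_norm_sub_norm_le (φ v) φc
      rw [← htdef, ← hxdef, ← hpdef] at this
      exact this
    have hxlow : p/2 ≤ x := by
      have := abs_le.mp hxp
      linarith
    have hΔ : |x^2 - p^2| ≤ t * (5*p/2) := by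
      have h1 : x^2 - p^2 = (x - p) * (x + p) := by ring
      rw [h1, abs_mul, abs_of_nonneg (by linarith : (0:ℝ) ≤ x + p)]
      have h2 : x + p ≤ 5*p/2 := by
        have := abs_le.mp hxp
        linarith
      exact mul_le_mul hxp h2 (by linarith) ht0
    have hΔD : |x^2 - p^2| ≤ (p/2) * (5*p/2) := by nlinarith
    have hrp : |x^2 - p^2| ^ ((3:ℝ)/2) ≤ S * |x^2 - p^2| := by
      rw [rpow_three_halves_eq _ (abs_nonneg _)]
      have hsq : Real.sqrt |x^2 - p^2| ≤ S := by
        rw [hSdef]; exact Real.sqrt_le_sqrt hΔD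
      exact mul_le_mul_of_nonneg_right hsq (abs_nonneg _)
    have hBv := hB v hv1
    rw [← htdef] at hBv
    have hvnn : (0:ℝ) ≤ ‖v‖ := norm_nonneg v
    have hM : S * (5*p/2) + 1 ≠ 0 := by positivity
    have key1 : c * (S * (5*p/2) + 1) = c₀ * (p^2/4) := by
      rw [hcdef, div_mul_cancel₀ _ hM]
    have key2 : c * (S * (5*p/2)) + c = c₀ * (p^2/4) := by
      linear_combination key1
    have key3 : c * (S * (5*p/2)) ≤ c₀ * (p^2/4) := by linarith
    have hx2 : p^2/4 ≤ x^2 := by nlinarith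
    calc c * |x^2 - p^2| ^ ((3:ℝ)/2)
        ≤ c * (S * |x^2 - p^2|) := by
          exact mul_le_mul_of_nonneg_left hrp hc0.le
      _ ≤ c * (S * (t * (5*p/2))) := by
          have : S * |x^2 - p^2| ≤ S * (t * (5*p/2)) :=
            mul_le_mul_of_nonneg_left hΔ hS0
          exact mul_le_mul_of_nonneg_left this hc0.le
      _ = (c * (S * (5*p/2))) * t := by ring
      _ ≤ (c₀ * (p^2/4)) * t := mul_le_mul_of_nonneg_right key3 ht0
      _ = (p^2/4) * (c₀ * t) := by ring
      _ ≤ (p^2/4) * ‖v‖ := mul_le_mul_of_nonneg_left hBv (by positivity)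
      _ = ‖v‖ * (p^2/4) := by ring
      _ ≤ ‖v‖ * x^2 := mul_le_mul_of_nonneg_left hx2 hvnn
end
end

section
/- Suppose f is proper (the preimage of every compact subset of ℝ is compact) and that near each critical point f satisfies a Łojasiewicz inequality: for every c ∈ E with ∇f(c) = 0 there exist an open neighbourhood U_c of c and constants k_c > 0 and 0 < α_c < 1 such that ‖∇f(x)‖ ≥ k_c·|f(x) − f(c)|^{α_c} for all x ∈ U_c. Then f satisfies a global Łojasiewicz inequality. -/
noncomputable section

/-- A proper function satisfying a Łojasiewicz inequality near each
critical point satisfies a global Łojasiewicz inequality. -/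
theorem stmt13 {E : Type*} [NormedAddCommGroup E] [InnerProductSpace ℝ E]
    [FiniteDimensional ℝ E]
    (f : E → ℝ) (hf : ContDiff ℝ 1 f)
    (hproper : ∀ K : Set ℝ, IsCompact K → IsCompact (f ⁻¹' K))
    (hloc : ∀ c : E, gradient f c = 0 → ∃ U : Set E, IsOpen U ∧ c ∈ U ∧
      ∃ k > (0:ℝ), ∃ a : ℝ, 0 < a ∧ a < 1 ∧
        ∀ x ∈ U, ‖gradient f x‖ ≥ k * |f x - f c| ^ a) :
    ∀ fc ∈ closure (Set.range f), ∃ ε > (0:ℝ), ∃ k > (0:ℝ), ∃ a : ℝ,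
      0 < a ∧ a < 1 ∧
        ∀ x : E, |f x - fc| < ε → ‖gradient f x‖ ≥ k * |f x - fc| ^ a := by
  intro fc hfc
  have hfcont : Continuous f := hf.continuous
  have hgc : Continuous (gradient f) := by
    have h1 : Continuous (fun x => fderiv ℝ f x) := hf.continuous_fderiv one_ne_zero
    exact (InnerProductSpace.toDual ℝ E).symm.continuous.comp h1
  -- compactness of the strip
  have hK0 : IsCompact (f ⁻¹' Metric.closedBall fc 1) :=
    hproper _ (isCompact_closedBall fc 1)
  -- fc is attained
  have hfcmem : fc ∈ f '' (f ⁻¹' Metric.closedBall fc 1) := by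
    have hclosed : IsClosed (f '' (f ⁻¹' Metric.closedBall fc 1)) :=
      (hK0.image hfcont).isClosed
    have : fc ∈ closure (f '' (f ⁻¹' Metric.closedBall fc 1)) := by
      rw [Metric.mem_closure_iff]
      intro ε hε
      rw [Metric.mem_closure_iff] at hfc
      obtain ⟨y, hy, hdy⟩ := hfc (min ε 1) (lt_min hε one_pos)
      obtain ⟨x, rfl⟩ := hy
      refine ⟨f x, ⟨x, ?_, rfl⟩, lt_of_lt_of_le hdy (min_le_left _ _)⟩
      simp only [Set.mem_preimage, Metric.mem_closedBall]
      rw [dist_comm] at hdy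
      exact le_of_lt (lt_of_lt_of_le hdy (min_le_right _ _))
    exact hclosed.closure_subset this
  obtain ⟨c0, -, hc0⟩ := hfcmem
  -- the compact level set
  set K : Set E := f ⁻¹' {fc} with hKdef
  have hKcomp : IsCompact K := hproper _ isCompact_singleton
  have hc0K : c0 ∈ K := by simp [hKdef, hc0]
  -- local inequality near every point of K
  have claim : ∀ c : E, f c = fc → ∃ U : Set E, IsOpen U ∧ c ∈ U ∧
      ∃ k, 0 < k ∧ ∃ a : ℝ, 0 < a ∧ a < 1 ∧
        ∀ x ∈ U, |f x - fc| < 1 → ‖gradient f x‖ ≥ k * |f x - fc| ^ a := by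
    intro c hc
    by_cases hg : gradient f c = 0
    · obtain ⟨U, hUo, hcU, k, hk, a, ha0, ha1, hineq⟩ := hloc c hg
      exact ⟨U, hUo, hcU, k, hk, a, ha0, ha1, fun x hx _ => by
        have := hineq x hx; rwa [hc] at this⟩
    · have hpos : 0 < ‖gradient f c‖ := norm_pos_iff.2 hg
      refine ⟨{x | ‖gradient f c‖ / 2 < ‖gradient f x‖}, ?_, ?_,
        ‖gradient f c‖ / 2, by positivity, 1/2, by norm_num, by norm_num, ?_⟩
      · exact isOpen_lt continuous_const hgc.norm
      · exact half_lt_self hpos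
      · intro x hx hx1
        have h1 : |f x - fc| ^ ((1:ℝ)/2) ≤ 1 :=
          Real.rpow_le_one (abs_nonneg _) hx1.le (by norm_num)
        calc ‖gradient f c‖ / 2 * |f x - fc| ^ ((1:ℝ)/2)
            ≤ ‖gradient f c‖ / 2 * 1 := by
              exact mul_le_mul_of_nonneg_left h1 (by positivity)
          _ = ‖gradient f c‖ / 2 := mul_one _
          _ ≤ ‖gradient f x‖ := le_of_lt hx
  have hmemK : ∀ c : K, f (c : E) = fc := fun c => c.2
  choose U hUo hcU k hk a ha0 ha1 hU using fun c : K => claim c (hmemK c)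
  -- finite subcover
  have hcov : K ⊆ ⋃ c : K, U c := fun x hx => Set.mem_iUnion.2 ⟨⟨x, hx⟩, hcU _⟩
  obtain ⟨t, ht⟩ := hKcomp.elim_finite_subcover U hUo hcov
  have htne : t.Nonempty := by
    obtain ⟨c, hct, -⟩ := Set.mem_iUnion₂.1 (ht hc0K)
    exact ⟨c, hct⟩
  set V : Set E := ⋃ c ∈ t, U c with hVdef
  have hVo : IsOpen V := isOpen_biUnion fun c _ => hUo c
  have hKV : K ⊆ V := ht
  -- constants
  set amax : ℝ := (t.image a).max' (htne.image a) with hamaxdef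
  set kmin : ℝ := (t.image k).min' (htne.image k) with hkmindef
  obtain ⟨ca, hcat, hca⟩ := Finset.mem_image.1 ((t.image a).max'_mem (htne.image a))
  obtain ⟨ck, hckt, hck⟩ := Finset.mem_image.1 ((t.image k).min'_mem (htne.image k))
  have hamax0 : 0 < amax := by rw [hamaxdef, ← hca]; exact ha0 ca
  have hamax1 : amax < 1 := by rw [hamaxdef, ← hca]; exact ha1 ca
  have hkmin0 : 0 < kmin := by rw [hkmindef, ← hck]; exact hk ck
  have hale : ∀ c ∈ t, a c ≤ amax := fun c hc =>
    Finset.le_max' _ _ (Finset.mem_image_of_mem a hc)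
  have hkle : ∀ c ∈ t, kmin ≤ k c := fun c hc =>
    Finset.min'_le _ _ (Finset.mem_image_of_mem k hc)
  -- find ε
  have hε : ∃ ε : ℝ, 0 < ε ∧ ε ≤ 1 ∧ ∀ x : E, |f x - fc| < ε → x ∈ V := by
    set C : Set E := (f ⁻¹' Metric.closedBall fc 1) \ V with hCdef
    have hCcomp : IsCompact C := hK0.diff hVo
    by_cases hC : C.Nonempty
    · obtain ⟨x0, hx0, hmin⟩ := hCcomp.exists_isMinOn hC
        ((continuous_abs.comp (hfcont.sub continuous_const)).continuousOn)
      have hmin : ∀ y ∈ C, |f x0 - fc| ≤ |f y - fc| := fun y hy => hmin hy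
      have hm0 : 0 < |f x0 - fc| := by
        rcases lt_or_eq_of_le (abs_nonneg (f x0 - fc)) with h | h
        · exact h
        · exfalso
          have : f x0 = fc := by
            have := h.symm
            rw [abs_eq_zero, sub_eq_zero] at this
            exact this
          exact hx0.2 (hKV (by simp [hKdef, this]))
      refine ⟨min |f x0 - fc| 1, lt_min hm0 one_pos, min_le_right _ _, ?_⟩
      intro x hx
      by_contra hxV
      have hx1 : |f x - fc| < 1 := lt_of_lt_of_le hx (min_le_right _ _)
      have hxC : x ∈ C := by
        refine ⟨?_, hxV⟩
        simp only [Set.mem_preimage, Metric.mem_closedBall, Real.dist_eq]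
        exact hx1.le
      have := hmin x hxC
      have hxm : |f x - fc| < |f x0 - fc| := lt_of_lt_of_le hx (min_le_left _ _)
      linarith
    · refine ⟨1, one_pos, le_refl _, ?_⟩
      intro x hx
      by_contra hxV
      exact hC ⟨x, ⟨by
        simp only [Set.mem_preimage, Metric.mem_closedBall, Real.dist_eq]
        exact hx.le, hxV⟩⟩
  obtain ⟨ε, hε0, hε1, hεV⟩ := hε
  refine ⟨ε, hε0, kmin, hkmin0, amax, hamax0, hamax1, ?_⟩
  intro x hx
  obtain ⟨c, hct, hxc⟩ := Set.mem_iUnion₂.1 (hεV x hx)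
  have h1 : ‖gradient f x‖ ≥ k c * |f x - fc| ^ (a c) :=
    hU c x hxc (lt_of_lt_of_le hx hε1)
  have hb0 : 0 ≤ |f x - fc| := abs_nonneg _
  rcases eq_or_lt_of_le hb0 with hb | hb
  · have : |f x - fc| ^ amax = 0 := by
      rw [← hb]; exact Real.zero_rpow (ne_of_gt hamax0)
    rw [this, mul_zero]
    exact norm_nonneg _
  · have hble : |f x - fc| ≤ 1 := le_of_lt (lt_of_lt_of_le hx hε1)
    have h2 : |f x - fc| ^ amax ≤ |f x - fc| ^ (a c) :=
      Real.rpow_le_rpow_of_exponent_ge hb hble (hale c hct)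
    calc kmin * |f x - fc| ^ amax
        ≤ k c * |f x - fc| ^ (a c) :=
          mul_le_mul (hkle c hct) h2 (Real.rpow_nonneg hb0 _) (le_of_lt (hk c))
      _ ≤ ‖gradient f x‖ := h1
end
end
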